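/- Let d ≥ 1, p ∈ (1/2, 1) and q = 1 − p. Let P be the d×d matrix with P_{i,i+1} = p for 1 ≤ i ≤ d−1, P_{i,i−1} = q for 2 ≤ i ≤ d, and all other entries 0, and set R = I − Pᵀ. Then R is invertible and the entries of R⁻¹ satisfy: (R⁻¹)_{ij} ≤ (q/p)^{j−i}/(p−q) for all 1 ≤ i ≤ j ≤ d, and (R⁻¹)_{ij} ≤ 1/(p−q) for all 1 ≤ j < i ≤ d. -/

import Mathlib

open Matrix

noncomputable def gAux (θ : ℝ) (d a b : ℕ) : ℝ :=
  if b ≤ a then (1 - θ^b) * (1 - θ^(d+1-a)) else θ^(b-a) * (1 - θ^a) * (1 - θ^(d+1-b))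

lemma gAux_zero (θ : ℝ) (d b : ℕ) (hb : 1 ≤ b) : gAux θ d 0 b = 0 := by
  unfold gAux
  rw [if_neg (by omega)]
  simp

lemma gAux_top (θ : ℝ) (d b : ℕ) (hb : b ≤ d + 1) : gAux θ d (d+1) b = 0 := by
  unfold gAux
  rw [if_pos hb, Nat.sub_self]
  simp

lemma gAux_key (p q : ℝ) (hq : q = 1 - p) (hp0 : p ≠ 0) (d a b : ℕ)
    (ha1 : 1 ≤ a) (had : a ≤ d) (hb1 : 1 ≤ b) (hbd : b ≤ d) :
    gAux (q/p) d a b - p * gAux (q/p) d (a-1) b - q * gAux (q/p) d (a+1) b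
      = if a = b then (p - q) * (1 - (q/p)^(d+1)) else 0 := by
  subst hq
  obtain ⟨s, rfl⟩ : ∃ s, a = s + 1 := ⟨a - 1, by omega⟩
  rcases lt_trichotomy (s+1) b with hab | rfl | hab
  · rw [if_neg (by omega)]
    rcases Nat.lt_or_ge (s+2) b with hb2 | hb2
    · obtain ⟨t, rfl⟩ : ∃ t, b = s + 1 + (t + 2) := ⟨b - s - 3, by omega⟩
      unfold gAux
      rw [if_neg (by omega), if_neg (by omega), if_neg (by omega)]
      rw [show s + 1 + (t+2) - (s+1) = t + 2 from by omega,
        show s + 1 - 1 = s from by omega,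
        show s + 1 + (t+2) - s = t + 3 from by omega,
        show s + 1 + (t+2) - (s+1+1) = t + 1 from by omega]
      simp only [div_pow]
      field_simp
      ring
    · obtain rfl : b = s + 2 := by omega
      unfold gAux
      rw [if_neg (by omega), if_neg (by omega), if_pos (by omega)]
      rw [show s + 2 - (s+1) = 1 from by omega,
        show s + 1 - 1 = s from by omega,
        show s + 2 - s = 2 from by omega,
        show d + 1 - (s+1+1) = d + 1 - (s+2) from by omega]
      simp only [div_pow]
      field_simp
      ring
  · rw [if_pos rfl]
    obtain ⟨u, rfl⟩ : ∃ u, d = s + 1 + u := ⟨d - s - 1, by omega⟩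
    unfold gAux
    rw [if_pos le_rfl, if_neg (by omega), if_pos (by omega)]
    rw [show s + 1 - 1 = s from by omega,
      show s + 1 - s = 1 from by omega,
      show s + 1 + u + 1 - (s+1) = u + 1 from by omega,
      show s + 1 + u + 1 - (s+1+1) = u from by omega,
      show s + 1 + u + 1 = s + u + 2 from by omega]
    simp only [div_pow]
    field_simp
    ring
  · rw [if_neg (by omega)]
    obtain ⟨t, rfl⟩ : ∃ t, s = b + t := ⟨s - b, by omega⟩
    obtain ⟨u, rfl⟩ : ∃ u, d = b + t + 1 + u := ⟨d - (b+t) - 1, by omega⟩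
    unfold gAux
    rw [if_pos (by omega), if_pos (by omega), if_pos (by omega)]
    rw [show b + t + 1 - 1 = b + t from by omega,
      show b + t + 1 + u + 1 - (b + t + 1) = u + 1 from by omega,
      show b + t + 1 + u + 1 - (b + t) = u + 2 from by omega,
      show b + t + 1 + u + 1 - (b + t + 1 + 1) = u from by omega]
    simp only [div_pow]
    field_simp
    ring

lemma one_sub_mul_le (x y T : ℝ) (hx1 : x ≤ 1) (hTx : T ≤ x) (hy0 : 0 ≤ y) :
    (1 - x) * (1 - y) ≤ 1 - T := by nlinarith

lemma gAux_le_upper (θ : ℝ) (h0 : 0 ≤ θ) (h1 : θ < 1) (d a b : ℕ)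
    (hb : b ≤ d) (hab : a ≤ b) :
    gAux θ d a b ≤ θ^(b-a) * (1 - θ^(d+1)) := by
  unfold gAux
  split_ifs with h
  · obtain rfl : a = b := le_antisymm hab h
    rw [Nat.sub_self, pow_zero, one_mul]
    exact one_sub_mul_le _ _ _ (pow_le_one₀ h0 h1.le)
      (pow_le_pow_of_le_one h0 h1.le (by omega)) (pow_nonneg h0 _)
  · rw [mul_assoc]
    refine mul_le_mul_of_nonneg_left ?_ (pow_nonneg h0 _)
    exact one_sub_mul_le _ _ _ (pow_le_one₀ h0 h1.le)
      (pow_le_pow_of_le_one h0 h1.le (by omega)) (pow_nonneg h0 _)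

lemma gAux_le_lower (θ : ℝ) (h0 : 0 ≤ θ) (h1 : θ < 1) (d a b : ℕ)
    (hbd : b ≤ d) (hba : b ≤ a) :
    gAux θ d a b ≤ 1 - θ^(d+1) := by
  unfold gAux
  rw [if_pos hba]
  exact one_sub_mul_le _ _ _ (pow_le_one₀ h0 h1.le)
    (pow_le_pow_of_le_one h0 h1.le (by omega)) (pow_nonneg h0 _)

lemma Kmul (c T x : ℝ) (hc : c ≠ 0) (hT : 1 - T ≠ 0) :
    (c * (1 - T))⁻¹ * (x * (1 - T)) = x / c := by
  field_simp

/-- Entrywise bounds on the inverse of the asymmetric Atlas reflection matrix `R = I - Pᵀ`.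
Indices of `Fin d` are 0-based, so the paper's 1-based index `i` corresponds to `(i : ℕ) + 1`. -/
theorem stmt2 (d : ℕ) (hd : 1 ≤ d) (p : ℝ) (hp : 1/2 < p) (hp1 : p < 1)
    (q : ℝ) (hq : q = 1 - p)
    (P : Matrix (Fin d) (Fin d) ℝ)
    (hP : ∀ i j : Fin d, P i j =
      if (j : ℕ) = (i : ℕ) + 1 then p else if (i : ℕ) = (j : ℕ) + 1 then q else 0)
    (R : Matrix (Fin d) (Fin d) ℝ) (hR : R = 1 - Pᵀ) :
    IsUnit R ∧
    (∀ i j : Fin d, (i : ℕ) ≤ (j : ℕ) →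
      R⁻¹ i j ≤ (q/p) ^ ((j : ℕ) - (i : ℕ)) / (p - q)) ∧
    (∀ i j : Fin d, (j : ℕ) < (i : ℕ) →
      R⁻¹ i j ≤ 1 / (p - q)) := by
  have hp0 : (0:ℝ) < p := by linarith
  have hq0 : (0:ℝ) < q := by rw [hq]; linarith
  have hqp : q < p := by rw [hq]; linarith
  have hθ0 : 0 ≤ q/p := div_nonneg hq0.le hp0.le
  have hθ1 : q/p < 1 := (div_lt_one hp0).mpr hqp
  have hT : (q/p)^(d+1) < 1 := pow_lt_one₀ hθ0 hθ1 (by omega)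
  have hD0 : 0 < (p - q) * (1 - (q/p)^(d+1)) := mul_pos (by linarith) (by linarith)
  set K : ℝ := ((p - q) * (1 - (q/p)^(d+1)))⁻¹ with hK
  have hK0 : 0 < K := inv_pos.mpr hD0
  set N : Matrix (Fin d) (Fin d) ℝ :=
    Matrix.of (fun i j : Fin d => K * gAux (q/p) d ((i:ℕ)+1) ((j:ℕ)+1)) with hN
  have hNapp : ∀ i j : Fin d, N i j = K * gAux (q/p) d ((i:ℕ)+1) ((j:ℕ)+1) := fun i j => rfl
  have hmain : R * N = 1 := by
    ext i j
    rw [Matrix.mul_apply]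
    have hsplit : ∀ k : Fin d, R i k * N k j =
        (if (i:ℕ) = (k:ℕ) then N k j else 0)
        - (if (i:ℕ) = (k:ℕ)+1 then p * N k j else 0)
        - (if (k:ℕ) = (i:ℕ)+1 then q * N k j else 0) := by
      intro k
      rw [hR]
      simp only [Matrix.sub_apply, Matrix.one_apply, Matrix.transpose_apply, hP, Fin.ext_iff]
      split_ifs <;> first | (exfalso; omega) | ring
    rw [Finset.sum_congr rfl fun k _ => hsplit k]
    rw [Finset.sum_sub_distrib, Finset.sum_sub_distrib]
    have e1 : ∑ k : Fin d, (if (i:ℕ) = (k:ℕ) then N k j else 0) = N i j := by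
      have hc : ∀ k : Fin d, ((i:ℕ) = (k:ℕ)) ↔ (k = i) := by
        intro k; rw [Fin.ext_iff]; omega
      simp only [hc]
      rw [Finset.sum_ite_eq' Finset.univ i (fun k => N k j), if_pos (Finset.mem_univ _)]
    have e2 : (∑ k : Fin d, if (i:ℕ) = (k:ℕ)+1 then p * N k j else 0)
        = p * (K * gAux (q/p) d (i:ℕ) ((j:ℕ)+1)) := by
      rcases Nat.eq_zero_or_pos (i:ℕ) with h0 | h0
      · rw [h0, gAux_zero _ _ _ (by omega)]
        rw [Finset.sum_eq_zero (fun k _ => by rw [if_neg (by omega)])]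
        ring
      · have hm : (i:ℕ) - 1 < d := by omega
        have hc : ∀ k : Fin d, ((i:ℕ) = (k:ℕ)+1) ↔ (k = ⟨(i:ℕ)-1, hm⟩) := by
          intro k; rw [Fin.ext_iff]; simp; omega
        simp only [hc]
        rw [Finset.sum_ite_eq' Finset.univ (⟨(i:ℕ)-1, hm⟩ : Fin d) (fun k => p * N k j),
          if_pos (Finset.mem_univ _), hNapp]
        simp only
        rw [show (i:ℕ)-1+1 = (i:ℕ) from by omega]
    have e3 : (∑ k : Fin d, if (k:ℕ) = (i:ℕ)+1 then q * N k j else 0)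
        = q * (K * gAux (q/p) d ((i:ℕ)+1+1) ((j:ℕ)+1)) := by
      rcases Nat.lt_or_ge ((i:ℕ)+1) d with hlt | hge
      · have hc : ∀ k : Fin d, ((k:ℕ) = (i:ℕ)+1) ↔ (k = ⟨(i:ℕ)+1, hlt⟩) := by
          intro k; rw [Fin.ext_iff]
        simp only [hc]
        rw [Finset.sum_ite_eq' Finset.univ (⟨(i:ℕ)+1, hlt⟩ : Fin d) (fun k => q * N k j),
          if_pos (Finset.mem_univ _), hNapp]
      · have hd1 : (i:ℕ)+1+1 = d+1 := by have := i.isLt; omega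
        rw [hd1, gAux_top _ _ _ (by omega)]
        rw [Finset.sum_eq_zero (fun k _ => by rw [if_neg (by have := k.isLt; omega)])]
        ring
    rw [e1, e2, e3, hNapp]
    have hkey := gAux_key p q hq (ne_of_gt hp0) d ((i:ℕ)+1) ((j:ℕ)+1)
      (by omega) (by omega) (by omega) (by omega)
    have hrw : K * gAux (q/p) d ((i:ℕ)+1) ((j:ℕ)+1) - p * (K * gAux (q/p) d (i:ℕ) ((j:ℕ)+1))
        - q * (K * gAux (q/p) d ((i:ℕ)+1+1) ((j:ℕ)+1))
        = K * (gAux (q/p) d ((i:ℕ)+1) ((j:ℕ)+1) - p * gAux (q/p) d ((i:ℕ)+1-1) ((j:ℕ)+1)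
          - q * gAux (q/p) d ((i:ℕ)+1+1) ((j:ℕ)+1)) := by
      rw [show (i:ℕ)+1-1 = (i:ℕ) from by omega]; ring
    rw [hrw, hkey, Matrix.one_apply]
    by_cases hij : (i:ℕ) = (j:ℕ)
    · rw [if_pos (by omega), if_pos (Fin.ext hij), hK]
      exact inv_mul_cancel₀ (ne_of_gt hD0)
    · rw [if_neg (by omega), if_neg (fun hc => hij (by rw [hc])), mul_zero]
  have hNR : N * R = 1 := mul_eq_one_comm.mp hmain
  have hunit : IsUnit R := ⟨⟨R, N, hmain, hNR⟩, rfl⟩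
  have hinv : R⁻¹ = N := Matrix.inv_eq_right_inv hmain
  refine ⟨hunit, ?_, ?_⟩
  · intro i j hij
    rw [hinv, hNapp]
    have hg := gAux_le_upper (q/p) hθ0 hθ1 d ((i:ℕ)+1) ((j:ℕ)+1) (by omega) (by omega)
    rw [show (j:ℕ)+1 - ((i:ℕ)+1) = (j:ℕ)-(i:ℕ) from by omega] at hg
    calc K * gAux (q/p) d ((i:ℕ)+1) ((j:ℕ)+1)
        ≤ K * ((q/p)^((j:ℕ)-(i:ℕ)) * (1 - (q/p)^(d+1))) :=
          mul_le_mul_of_nonneg_left hg hK0.le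
      _ = (q/p) ^ ((j:ℕ)-(i:ℕ)) / (p - q) := by
          rw [hK]
          exact Kmul _ _ _ (by linarith) (by linarith)
  · intro i j hij
    rw [hinv, hNapp]
    have hg := gAux_le_lower (q/p) hθ0 hθ1 d ((i:ℕ)+1) ((j:ℕ)+1) (by omega) (by omega)
    calc K * gAux (q/p) d ((i:ℕ)+1) ((j:ℕ)+1)
        ≤ K * (1 - (q/p)^(d+1)) := mul_le_mul_of_nonneg_left hg hK0.le
      _ = K * (1 * (1 - (q/p)^(d+1))) := by ring
      _ = 1 / (p - q) := by
          rw [hK]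
          exact Kmul _ _ _ (by linarith) (by linarith)
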